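/- Let f(x,y) = β0 + β1 x + β2 y + β3 x y be a bilinear function and ℓ ≥ 0 a natural number. For 0 ≤ i, j ≤ 2^ℓ − 1 let ψ^ℓ_{ij} be the bilinear function determined by the corner values ψ^ℓ_{ij}(δ,ε) = f((i+δ)/2^ℓ, (j+ε)/2^ℓ) for δ, ε ∈ {0,1}. Then the area of {(x,y) ∈ [0,1]² : f(x,y) > 0} equals 4^{−ℓ} · Σ_{i,j=0}^{2^ℓ−1} area of {(u,v) ∈ [0,1]² : ψ^ℓ_{ij}(u,v) > 0}. That is, the analytical volume estimate is consistent under arbitrarily many levels of mesh refinement with bilinear interpolation. -/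

import Mathlib

open MeasureTheory
open scoped ENNReal Pointwise

private lemma bilin_eq_of_corners (g h : ℝ → ℝ → ℝ)
    (hg : ∃ a b c d : ℝ, ∀ u v, g u v = a + b*u + c*v + d*(u*v))
    (hh : ∃ a b c d : ℝ, ∀ u v, h u v = a + b*u + c*v + d*(u*v))
    (h00 : g 0 0 = h 0 0) (h10 : g 1 0 = h 1 0)
    (h01 : g 0 1 = h 0 1) (h11 : g 1 1 = h 1 1) :
    ∀ u v, g u v = h u v := by
  obtain ⟨a, b, c, d, hg⟩ := hg
  obtain ⟨a', b', c', d', hh⟩ := hh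
  intro u v
  simp only [hg, hh] at h00 h10 h01 h11 ⊢
  linear_combination (1 - u - v + u*v) * h00 + (u - u*v) * h10
    + (v - u*v) * h01 + (u*v) * h11

private lemma vol_line1 (t : ℝ) : volume {p : ℝ×ℝ | p.1 = t} = 0 := by
  have : {p : ℝ×ℝ | p.1 = t} = {t} ×ˢ (Set.univ : Set ℝ) := by
    ext p; constructor
    · intro h; exact ⟨h.symm ▸ rfl, trivial⟩
    · intro h; simpa using h.1
  rw [this, Measure.volume_eq_prod, Measure.prod_prod]; simp

private lemma vol_line2 (t : ℝ) : volume {p : ℝ×ℝ | p.2 = t} = 0 := by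
  have : {p : ℝ×ℝ | p.2 = t} = (Set.univ : Set ℝ) ×ˢ {t} := by
    ext p; constructor
    · intro h; exact ⟨trivial, h⟩
    · intro h; simpa using h.2
  rw [this, Measure.volume_eq_prod, Measure.prod_prod]; simp

private lemma meas_eq_of_diff_null {A B : Set (ℝ×ℝ)} (h1 : A ⊆ B)
    (h2 : volume (B \ A) = 0) : volume B = volume A := by
  refine le_antisymm ?_ (measure_mono h1)
  calc volume B = volume (A ∪ (B \ A)) := by rw [Set.union_diff_cancel h1]
    _ ≤ volume A + volume (B \ A) := measure_union_le _ _
    _ = volume A := by rw [h2, add_zero]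

/-- The 2D analytical volume estimate is consistent under ℓ levels of mesh
refinement with bilinear interpolation: the area of {f > 0} in the unit square
equals 4^{−ℓ} times the sum over all 4^ℓ subcells of the areas of
{ψ^ℓ_{ij} > 0}, where ψ^ℓ_{ij} is the bilinear function determined by the
bilinearly interpolated corner values of the subcell
[i/2^ℓ,(i+1)/2^ℓ] × [j/2^ℓ,(j+1)/2^ℓ]. -/
theorem bilinear_volume_consistent_many_levels
    (β0 β1 β2 β3 : ℝ) (f : ℝ → ℝ → ℝ)
    (hf : ∀ x y : ℝ, f x y = β0 + β1 * x + β2 * y + β3 * (x * y))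
    (ℓ : ℕ) (ψ : ℕ → ℕ → ℝ → ℝ → ℝ)
    (hψbil : ∀ i j : ℕ, i < 2 ^ ℓ → j < 2 ^ ℓ → ∃ γ0 γ1 γ2 γ3 : ℝ,
      ∀ u v : ℝ, ψ i j u v = γ0 + γ1 * u + γ2 * v + γ3 * (u * v))
    (hψcorner : ∀ i j : ℕ, i < 2 ^ ℓ → j < 2 ^ ℓ → ∀ δ ε : Fin 2,
      ψ i j ((δ : ℕ) : ℝ) ((ε : ℕ) : ℝ)
        = f (((i : ℝ) + ((δ : ℕ) : ℝ)) / 2 ^ ℓ)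
            (((j : ℝ) + ((ε : ℕ) : ℝ)) / 2 ^ ℓ)) :
    volume {p : ℝ × ℝ | p.1 ∈ Set.Icc (0 : ℝ) 1 ∧ p.2 ∈ Set.Icc (0 : ℝ) 1 ∧
        0 < f p.1 p.2}
      = ((4 : ℝ≥0∞) ^ ℓ)⁻¹ * ∑ i ∈ Finset.range (2 ^ ℓ),
          ∑ j ∈ Finset.range (2 ^ ℓ),
            volume {p : ℝ × ℝ | p.1 ∈ Set.Icc (0 : ℝ) 1 ∧
              p.2 ∈ Set.Icc (0 : ℝ) 1 ∧ 0 < ψ i j p.1 p.2} := by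
  set N := 2 ^ ℓ with hN
  set c : ℝ := 2 ^ ℓ with hcdef
  have hc : (0:ℝ) < c := by positivity
  have hcN : ((N : ℕ) : ℝ) = c := by push_cast [hN, hcdef]; ring
  -- Step 1: ψ i j is the rescaling of f
  have hpsi : ∀ i j : ℕ, i < N → j < N → ∀ u v : ℝ,
      ψ i j u v = f (((i:ℝ) + u) / c) (((j:ℝ) + v) / c) := by
    intro i j hi hj
    refine bilin_eq_of_corners _ _ (hψbil i j hi hj) ?_ ?_ ?_ ?_ ?_
    · refine ⟨β0 + β1 * (i/c) + β2 * (j/c) + β3 * (i/c * (j/c)),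
        β1 / c + β3 * (j / c^2), β2 / c + β3 * (i / c^2), β3 / c^2, ?_⟩
      intro u v
      rw [hf]
      field_simp
      ring
    · simpa using hψcorner i j hi hj 0 0
    · simpa using hψcorner i j hi hj 1 0
    · simpa using hψcorner i j hi hj 0 1
    · simpa using hψcorner i j hi hj 1 1
  -- continuity / measurability
  have hfc : Continuous fun p : ℝ × ℝ => f p.1 p.2 := by
    have : (fun p : ℝ × ℝ => f p.1 p.2)
        = fun p : ℝ × ℝ => β0 + β1 * p.1 + β2 * p.2 + β3 * (p.1 * p.2) :=
      funext fun p => hf _ _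
    rw [this]; fun_prop
  -- the subcell pieces of {f > 0}
  set T : ℕ → ℕ → Set (ℝ × ℝ) := fun i j =>
    {p : ℝ × ℝ | p.1 ∈ Set.Icc ((i:ℝ)/c) (((i:ℝ)+1)/c) ∧
      p.2 ∈ Set.Icc ((j:ℝ)/c) (((j:ℝ)+1)/c) ∧ 0 < f p.1 p.2} with hT
  set T' : ℕ → ℕ → Set (ℝ × ℝ) := fun i j =>
    {p : ℝ × ℝ | p.1 ∈ Set.Ico ((i:ℝ)/c) (((i:ℝ)+1)/c) ∧
      p.2 ∈ Set.Ico ((j:ℝ)/c) (((j:ℝ)+1)/c) ∧ 0 < f p.1 p.2} with hT'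
  have hT'meas : ∀ i j : ℕ, MeasurableSet (T' i j) := by
    intro i j
    have : T' i j = (Set.Ico ((i:ℝ)/c) (((i:ℝ)+1)/c) ×ˢ
        Set.Ico ((j:ℝ)/c) (((j:ℝ)+1)/c)) ∩ {p : ℝ × ℝ | 0 < f p.1 p.2} := by
      ext p; simp [hT', Set.mem_prod, and_assoc]
    rw [this]
    exact (measurableSet_Ico.prod measurableSet_Ico).inter
      ((isOpen_lt continuous_const hfc).measurableSet)
  -- T and T' have the same volume
  have hTT' : ∀ i j : ℕ, volume (T i j) = volume (T' i j) := by
    intro i j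
    refine meas_eq_of_diff_null ?_ ?_
    · intro p hp
      exact ⟨Set.Ico_subset_Icc_self hp.1, Set.Ico_subset_Icc_self hp.2.1, hp.2.2⟩
    · refine measure_mono_null ?_
        (measure_union_null (vol_line1 (((i:ℝ)+1)/c)) (vol_line2 (((j:ℝ)+1)/c)))
      rintro ⟨x, y⟩ ⟨⟨hx, hy, hfp⟩, hnot⟩
      simp only [hT', Set.mem_setOf_eq, Set.mem_Ico, not_and, not_lt] at hnot
      by_cases hx' : x < ((i:ℝ)+1)/c
      · by_cases hy' : y < ((j:ℝ)+1)/c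
        · exact absurd hfp (not_lt.mpr (hnot ⟨hx.1, hx'⟩ ⟨hy.1, hy'⟩))
        · exact Or.inr (le_antisymm hy.2 (not_lt.mp hy'))
      · exact Or.inl (le_antisymm hx.2 (not_lt.mp hx'))
  -- scaling: volume of the ψ-set equals 4^ℓ times volume of T
  have hscale : ∀ i j : ℕ, i < N → j < N →
      volume (T i j) = ((4 : ℝ≥0∞) ^ ℓ)⁻¹ *
        volume {p : ℝ × ℝ | p.1 ∈ Set.Icc (0:ℝ) 1 ∧ p.2 ∈ Set.Icc (0:ℝ) 1 ∧
          0 < ψ i j p.1 p.2} := by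
    intro i j hi hj
    set S : Set (ℝ × ℝ) := {p : ℝ × ℝ | p.1 ∈ Set.Icc (0:ℝ) 1 ∧
      p.2 ∈ Set.Icc (0:ℝ) 1 ∧ 0 < ψ i j p.1 p.2} with hS
    have hkey : T i j = c⁻¹ • ((((i:ℝ), (j:ℝ)) : ℝ × ℝ) +ᵥ S) := by
      ext ⟨x, y⟩
      rw [Set.mem_smul_set_iff_inv_smul_mem₀ (by positivity : c⁻¹ ≠ 0),
        Set.mem_vadd_set_iff_neg_vadd_mem]
      have hxy : (-((i:ℝ), (j:ℝ)) +ᵥ (c⁻¹)⁻¹ • ((x : ℝ), y))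
          = (c * x - i, c * y - j) := by
        simp [Prod.ext_iff, vadd_eq_add, Prod.smul_def, smul_eq_mul]
        constructor <;> ring
      rw [hxy]
      simp only [hS, hT, Set.mem_setOf_eq, Set.mem_Icc]
      constructor
      · rintro ⟨⟨hx1, hx2⟩, ⟨hy1, hy2⟩, hfp⟩
        refine ⟨⟨by nlinarith [(div_le_iff₀ hc).mp hx1], by
          nlinarith [(le_div_iff₀ hc).mp hx2]⟩,
          ⟨by nlinarith [(div_le_iff₀ hc).mp hy1], by
          nlinarith [(le_div_iff₀ hc).mp hy2]⟩, ?_⟩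
        rw [hpsi i j hi hj]
        have e1 : ((i:ℝ) + (c * x - i)) / c = x := by field_simp; ring
        have e2 : ((j:ℝ) + (c * y - j)) / c = y := by field_simp; ring
        rw [e1, e2]; exact hfp
      · rintro ⟨⟨hx1, hx2⟩, ⟨hy1, hy2⟩, hfp⟩
        rw [hpsi i j hi hj] at hfp
        have e1 : ((i:ℝ) + (c * x - i)) / c = x := by field_simp; ring
        have e2 : ((j:ℝ) + (c * y - j)) / c = y := by field_simp; ring
        rw [e1, e2] at hfp
        refine ⟨⟨(div_le_iff₀ hc).mpr (by linarith),
          (le_div_iff₀ hc).mpr (by linarith)⟩,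
          ⟨(div_le_iff₀ hc).mpr (by linarith),
          (le_div_iff₀ hc).mpr (by linarith)⟩, hfp⟩
    rw [hkey, Measure.addHaar_smul, measure_vadd (μ := volume)]
    congr 1
    have h2 : Module.finrank ℝ (ℝ × ℝ) = 2 := by simp
    rw [h2]
    have hr : |c⁻¹| ^ 2 = (((4:ℝ)) ^ ℓ)⁻¹ := by
      rw [abs_of_pos (by positivity : (0:ℝ) < c⁻¹), hcdef, inv_pow, ← pow_mul,
        mul_comm, pow_mul]
      norm_num
    have hr2 : |c⁻¹ ^ 2| = (((4:ℝ)) ^ ℓ)⁻¹ := by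
      rw [abs_pow]; exact hr
    rw [hr2, ENNReal.ofReal_inv_of_pos (by positivity),
      ENNReal.ofReal_pow (by norm_num)]
    norm_num
  -- decomposition of the unit square into the subcells, up to null sets
  set U : Set (ℝ × ℝ) := {p : ℝ × ℝ | p.1 ∈ Set.Icc (0:ℝ) 1 ∧
    p.2 ∈ Set.Icc (0:ℝ) 1 ∧ 0 < f p.1 p.2} with hU
  set U' : Set (ℝ × ℝ) := {p : ℝ × ℝ | p.1 ∈ Set.Ico (0:ℝ) 1 ∧
    p.2 ∈ Set.Ico (0:ℝ) 1 ∧ 0 < f p.1 p.2} with hU'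
  have hUU' : volume U = volume U' := by
    refine meas_eq_of_diff_null ?_ ?_
    · intro p hp
      exact ⟨Set.Ico_subset_Icc_self hp.1, Set.Ico_subset_Icc_self hp.2.1, hp.2.2⟩
    · refine measure_mono_null ?_
        (measure_union_null (vol_line1 (1:ℝ)) (vol_line2 (1:ℝ)))
      rintro ⟨x, y⟩ ⟨⟨hx, hy, hfp⟩, hnot⟩
      simp only [hU', Set.mem_setOf_eq, Set.mem_Ico, not_and, not_lt] at hnot
      by_cases hx' : x < 1
      · by_cases hy' : y < 1
        · exact absurd hfp (not_lt.mpr (hnot ⟨hx.1, hx'⟩ ⟨hy.1, hy'⟩))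
        · exact Or.inr (le_antisymm hy.2 (not_lt.mp hy'))
      · exact Or.inl (le_antisymm hx.2 (not_lt.mp hx'))
  -- the 1D decomposition facts
  have hIco : ∀ x : ℝ, x ∈ Set.Ico (0:ℝ) 1 → ∃ i : ℕ, i < N ∧
      x ∈ Set.Ico ((i:ℝ)/c) (((i:ℝ)+1)/c) := by
    intro x hx
    refine ⟨⌊x * c⌋₊, ?_, ?_, ?_⟩
    · rw [Nat.floor_lt (by nlinarith [hx.1])]
      rw [hcN]; nlinarith [hx.2]
    · rw [div_le_iff₀ hc]
      exact Nat.floor_le (by nlinarith [hx.1])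
    · rw [lt_div_iff₀ hc]
      have := Nat.lt_floor_add_one (x * c)
      push_cast at this ⊢
      linarith
  have hIcoSub : ∀ i : ℕ, i < N → Set.Ico ((i:ℝ)/c) (((i:ℝ)+1)/c) ⊆
      Set.Ico (0:ℝ) 1 := by
    intro i hi x hx
    constructor
    · exact le_trans (by positivity) hx.1
    · refine lt_of_lt_of_le hx.2 ?_
      rw [div_le_one hc, ← hcN]
      have : (i:ℝ) + 1 ≤ (N:ℝ) := by exact_mod_cast hi
      linarith
  -- the union equality
  have hUnion : U' = ⋃ q ∈ Finset.range N ×ˢ Finset.range N, T' q.1 q.2 := by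
    ext ⟨x, y⟩
    simp only [Set.mem_iUnion, Finset.mem_product, Finset.mem_range, hU',
      Set.mem_setOf_eq]
    constructor
    · rintro ⟨hx, hy, hfp⟩
      obtain ⟨i, hi, hxi⟩ := hIco x hx
      obtain ⟨j, hj, hyj⟩ := hIco y hy
      exact ⟨(i, j), ⟨hi, hj⟩, hxi, hyj, hfp⟩
    · rintro ⟨⟨i, j⟩, ⟨hi, hj⟩, hxi, hyj, hfp⟩
      exact ⟨hIcoSub i hi hxi, hIcoSub j hj hyj, hfp⟩
  -- disjointness
  have hdisj : (↑(Finset.range N ×ˢ Finset.range N) : Set (ℕ × ℕ)).PairwiseDisjoint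
      (fun q : ℕ × ℕ => T' q.1 q.2) := by
    have h1d : ∀ i k : ℕ, i ≠ k →
        Disjoint (Set.Ico ((i:ℝ)/c) (((i:ℝ)+1)/c))
          (Set.Ico ((k:ℝ)/c) (((k:ℝ)+1)/c)) := by
      intro i k hik
      rw [Set.Ico_disjoint_Ico]
      rcases lt_or_gt_of_ne hik with h | h
      · have : (i:ℝ) + 1 ≤ (k:ℝ) := by exact_mod_cast h
        calc min (((i:ℝ)+1)/c) (((k:ℝ)+1)/c) ≤ ((i:ℝ)+1)/c := min_le_left _ _
          _ ≤ (k:ℝ)/c := by gcongr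
          _ ≤ max ((i:ℝ)/c) ((k:ℝ)/c) := le_max_right _ _
      · have : (k:ℝ) + 1 ≤ (i:ℝ) := by exact_mod_cast h
        calc min (((i:ℝ)+1)/c) (((k:ℝ)+1)/c) ≤ ((k:ℝ)+1)/c := min_le_right _ _
          _ ≤ (i:ℝ)/c := by gcongr
          _ ≤ max ((i:ℝ)/c) ((k:ℝ)/c) := le_max_left _ _
    rintro ⟨i, j⟩ _ ⟨k, l⟩ _ hne
    rcases ne_or_eq i k with h | rfl
    · refine Set.disjoint_left.mpr ?_
      rintro ⟨x, y⟩ hp hq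
      exact Set.disjoint_left.mp (h1d i k h) hp.1 hq.1
    · have hjl : j ≠ l := fun h => hne (by rw [h])
      refine Set.disjoint_left.mpr ?_
      rintro ⟨x, y⟩ hp hq
      exact Set.disjoint_left.mp (h1d j l hjl) hp.2.1 hq.2.1
  -- put it together
  have hsum : volume U' = ∑ q ∈ Finset.range N ×ˢ Finset.range N,
      volume (T' q.1 q.2) := by
    rw [hUnion]
    exact measure_biUnion_finset hdisj (fun q _ => hT'meas q.1 q.2)
  calc volume U = volume U' := hUU'
    _ = ∑ q ∈ Finset.range N ×ˢ Finset.range N, volume (T' q.1 q.2) := hsum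
    _ = ∑ i ∈ Finset.range N, ∑ j ∈ Finset.range N, volume (T' i j) := by
        rw [Finset.sum_product]
    _ = ∑ i ∈ Finset.range N, ∑ j ∈ Finset.range N, volume (T i j) := by
        refine Finset.sum_congr rfl fun i _ => Finset.sum_congr rfl fun j _ => ?_
        rw [hTT']
    _ = ((4 : ℝ≥0∞) ^ ℓ)⁻¹ * ∑ i ∈ Finset.range N, ∑ j ∈ Finset.range N,
        volume {p : ℝ × ℝ | p.1 ∈ Set.Icc (0:ℝ) 1 ∧ p.2 ∈ Set.Icc (0:ℝ) 1 ∧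
          0 < ψ i j p.1 p.2} := by
        rw [Finset.mul_sum]
        refine Finset.sum_congr rfl fun i hi => ?_
        rw [Finset.mul_sum]
        refine Finset.sum_congr rfl fun j hj => ?_
        exact hscale i j (Finset.mem_range.mp hi) (Finset.mem_range.mp hj)
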